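/- Let q = (q_{ij}) be a matrix of nonzero scalars of Cartan type, i.e. there is an integer matrix C = (c_{ij}) with c_{ii} = 2 and q_{ij} q_{ji} = q_{ii}^{c_{ij}} for all i ≠ j. Fix i and define the reflected matrix (ρ_i q)_{jk} = q_{jk} · q_{ik}^{−c_{ij}} · q_{ji}^{−c_{ik}} · q_{ii}^{c_{ij} c_{ik}}. Then (ρ_i q)_{jj} = q_{jj} for all j, and ρ_i q is again of Cartan type with the same matrix C, i.e. (ρ_i q)_{jk} (ρ_i q)_{kj} = (ρ_i q)_{jj}^{c_{jk}} for all j ≠ k. -/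
import Mathlib


theorem reflection_preserves_cartan_type
    (k : Type*) [Field k] (θ : ℕ)
    (q : Fin θ → Fin θ → k) (hq : ∀ a b, q a b ≠ 0)
    (C : Fin θ → Fin θ → ℤ) (hCd : ∀ a, C a a = 2)
    (hCartan : ∀ a b, a ≠ b → q a b * q b a = q a a ^ (C a b))
    (i : Fin θ)
    (ρ : Fin θ → Fin θ → k)
    (hρ : ∀ j l, ρ j l =
      q j l * q i l ^ (-(C i j)) * q j i ^ (-(C i l)) * q i i ^ (C i j * C i l)) :
    (∀ j, ρ j j = q j j) ∧ (∀ j l, j ≠ l → ρ j l * ρ l j = ρ j j ^ (C j l)) := by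
  have hC : ∀ a b, q a b * q b a = q a a ^ (C a b) := by
    intro a b
    by_cases h : a = b
    · subst h; rw [hCd, zpow_two]
    · exact hCartan a b h
  have hdiag : ∀ j, ρ j j = q j j := by
    intro j
    rw [hρ]
    calc q j j * q i j ^ (-C i j) * q j i ^ (-C i j) * q i i ^ (C i j * C i j)
        = q j j * ((q i j * q j i) ^ (-C i j) * q i i ^ (C i j * C i j)) := by
          rw [mul_zpow]; ring
      _ = q j j := by
          rw [hC i j, ← zpow_mul, ← zpow_add₀ (hq i i)]
          rw [show C i j * -C i j + C i j * C i j = 0 by ring]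
          simp
  refine ⟨hdiag, fun j l _ => ?_⟩
  rw [hρ j l, hρ l j, hdiag j]
  calc q j l * q i l ^ (-C i j) * q j i ^ (-C i l) * q i i ^ (C i j * C i l) *
        (q l j * q i j ^ (-C i l) * q l i ^ (-C i j) * q i i ^ (C i l * C i j))
      = (q j l * q l j) * ((q i l * q l i) ^ (-C i j) * ((q i j * q j i) ^ (-C i l) *
          q i i ^ (C i j * C i l + C i l * C i j))) := by
        rw [mul_zpow, mul_zpow, zpow_add₀ (hq i i)]; ring
    _ = q j j ^ (C j l) := by
        rw [hC i l, hC i j, hC j l, ← zpow_mul, ← zpow_mul, ← zpow_add₀ (hq i i),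
          ← zpow_add₀ (hq i i)]
        rw [show C i l * -C i j + (C i j * -C i l + (C i j * C i l + C i l * C i j)) = 0 by ring]
        simp
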